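/- Let A be a bounded operator on a complex Hilbert space that decomposes as A = S + N where S is normal, N is nilpotent with N^{m+1} = 0, SN = NS, and every bounded operator commuting with A also commutes with S. Then for every integer s ≥ 2m+1, C_s(C_s(A)) ⊆ C_1(C_1(A)); in particular C_s(C_s(A)) is contained in the von Neumann algebra generated by A and the identity. -/

import Mathlib

set_option linter.unusedSectionVars false
open NormedSpace Finset

namespace Stmt11Aux

variable {𝔸 : Type*} [NormedRing 𝔸] [NormedAlgebra ℂ 𝔸] [StarRing 𝔸] [CStarRing 𝔸]
  [CompleteSpace 𝔸] [StarModule ℂ 𝔸]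

noncomputable def ratNormedAlgebra : NormedAlgebra ℚ 𝔸 := NormedAlgebra.restrictScalars ℚ ℂ 𝔸

attribute [local instance] ratNormedAlgebra

/-- The inner derivation as a linear endomorphism. -/
noncomputable def adE (Y : 𝔸) : Module.End ℂ 𝔸 := LinearMap.mulLeft ℂ Y - LinearMap.mulRight ℂ Y

lemma adE_apply (Y X : 𝔸) : adE Y X = Y * X - X * Y := rfl

lemma iterate_eq (Y X : 𝔸) (k : ℕ) :
    (fun Z => Y * Z - Z * Y)^[k] X = ((adE Y) ^ k) X := by
  induction k with
  | zero => simp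
  | succ n ih =>
      rw [Function.iterate_succ_apply', ih, pow_succ', Module.End.mul_apply, adE_apply]

lemma adE_add (Y Z : 𝔸) : adE (Y + Z) = adE Y + adE Z := by
  ext X
  simp only [adE_apply, LinearMap.add_apply, add_mul, mul_add]
  abel

lemma adE_commute {Y Z : 𝔸} (h : Y * Z = Z * Y) : Commute (adE Y) (adE Z) := by
  show adE Y * adE Z = adE Z * adE Y
  ext X
  simp only [Module.End.mul_apply, adE_apply, Module.End.mul_apply]
  have h1 : Y * (Z * X) = Z * (Y * X) := by rw [← mul_assoc, h, mul_assoc]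
  have h2 : X * (Z * Y) = X * (Y * Z) := by rw [h]
  simp only [mul_sub, sub_mul, mul_assoc]
  rw [h1, h2]
  abel

lemma adE_pow_nilpotent (N : 𝔸) (m : ℕ) (hN : N ^ (m + 1) = 0) {s : ℕ}
    (hs : 2 * m + 1 ≤ s) (X : 𝔸) : ((adE N) ^ s) X = 0 := by
  have hc : Commute (LinearMap.mulLeft ℂ N) (-(LinearMap.mulRight ℂ N)) :=
    (LinearMap.commute_mulLeft_right N N).neg_right
  have hdef : adE N = LinearMap.mulLeft ℂ N + -(LinearMap.mulRight ℂ N) :=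
    sub_eq_add_neg _ _
  rw [hdef, hc.add_pow]
  rw [LinearMap.sum_apply]
  apply Finset.sum_eq_zero
  intro j hj
  rcases le_or_gt j m with hjm | hjm
  · -- N ^ (s - j) = 0
    have hz : N ^ (s - j) = 0 := by
      have : m + 1 ≤ s - j := by omega
      exact pow_eq_zero_of_le this hN
    have hR : (LinearMap.mulRight ℂ N) ^ (s - j) = 0 := by
      rw [LinearMap.pow_mulRight, hz]
      exact LinearMap.mulRight_zero_eq_zero ℂ 𝔸
    have : (-(LinearMap.mulRight ℂ N)) ^ (s - j) = 0 := by
      rw [neg_pow, hR, mul_zero]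
    rw [mul_assoc, this]
    simp
  · -- N ^ j = 0
    have hz : N ^ j = 0 := by
      have : m + 1 ≤ j := by omega
      exact pow_eq_zero_of_le this hN
    have hL : (LinearMap.mulLeft ℂ N) ^ j = 0 := by
      rw [LinearMap.pow_mulLeft, hz]
      exact LinearMap.mulLeft_zero_eq_zero ℂ 𝔸
    rw [hL]
    simp

lemma cs_of_commutes (A S N : 𝔸) (m : ℕ) (hA : A = S + N) (hSN : S * N = N * S)
    (hN : N ^ (m + 1) = 0) {s : ℕ} (hs : 2 * m + 1 ≤ s) (X : 𝔸)
    (hX : S * X = X * S) : ((adE A) ^ s) X = 0 := by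
  have hadd : adE A = adE S + adE N := by rw [hA, adE_add]
  have hc : Commute (adE S) (adE N) := adE_commute hSN
  rw [hadd, hc.add_pow, LinearMap.sum_apply]
  apply Finset.sum_eq_zero
  intro j hj
  have hSX : adE S X = 0 := by rw [adE_apply, hX, sub_self]
  rcases Nat.eq_zero_or_pos j with rfl | hj1
  · simp only [pow_zero, one_mul, Nat.choose_zero_right, Nat.cast_one, mul_one]
    exact adE_pow_nilpotent N m hN hs X
  · obtain ⟨i, rfl⟩ : ∃ i, j = i + 1 := ⟨j - 1, by omega⟩
    rw [(hc.pow_pow (i + 1) (s - (i + 1))).eq, mul_assoc, Module.End.mul_apply,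
      Module.End.mul_apply]
    have : ((adE S) ^ (i + 1)) (((s.choose (i + 1) : Module.End ℂ 𝔸)) X) = 0 := by
      have hnc : ((s.choose (i + 1) : Module.End ℂ 𝔸)) X
          = (s.choose (i + 1) : ℕ) • X := by
        simp [Module.End.natCast_apply]
      rw [hnc, map_nsmul, pow_succ, Module.End.mul_apply, hSX, map_zero, smul_zero]
    rw [this, map_zero]


lemma coeff_zero_of_bounded (n : ℕ) (c : ℕ → 𝔸) (M : ℝ)
    (h : ∀ t : ℝ, 1 ≤ t → ‖∑ k ∈ range n, t ^ k • c k‖ ≤ M) :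
    ∀ k, 1 ≤ k → k < n → c k = 0 := by
  induction n with
  | zero => intro k hk1 hk2; omega
  | succ n ih =>
    have hM : 0 ≤ M := le_trans (norm_nonneg _) (h 1 le_rfl)
    intro k hk1 hkn
    by_cases hn : n = 0
    · omega
    have hn1 : 1 ≤ n := Nat.one_le_iff_ne_zero.2 hn
    have hcn : c n = 0 := by
      by_contra hc0
      set C : ℝ := ∑ k ∈ range n, ‖c k‖ with hC
      have key : ∀ t : ℝ, 1 ≤ t → t * ‖c n‖ ≤ M + C := by
        intro t ht
        have ht0 : (0:ℝ) < t := lt_of_lt_of_le one_pos ht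
        have h1 : t ^ n • c n
            = (∑ k ∈ range (n + 1), t ^ k • c k) - ∑ k ∈ range n, t ^ k • c k := by
          rw [Finset.sum_range_succ]; abel
        have h2 : t ^ n * ‖c n‖ ≤ M + ∑ k ∈ range n, t ^ k * ‖c k‖ := by
          have e1 : t ^ n * ‖c n‖ = ‖t ^ n • c n‖ := by
            rw [norm_smul, Real.norm_eq_abs, abs_of_pos (pow_pos ht0 n)]
          have e2 : ‖∑ k ∈ range n, t ^ k • c k‖ ≤ ∑ k ∈ range n, t ^ k * ‖c k‖ := by
            refine le_trans (norm_sum_le _ _) (le_of_eq ?_)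
            refine Finset.sum_congr rfl fun k _ => ?_
            rw [norm_smul, Real.norm_eq_abs, abs_of_pos (pow_pos ht0 k)]
          calc t ^ n * ‖c n‖ = ‖t ^ n • c n‖ := e1
            _ ≤ ‖∑ k ∈ range (n + 1), t ^ k • c k‖ + ‖∑ k ∈ range n, t ^ k • c k‖ := by
                rw [h1]; exact norm_sub_le _ _
            _ ≤ M + ∑ k ∈ range n, t ^ k * ‖c k‖ := add_le_add (h t ht) e2
        have h3 : ∑ k ∈ range n, t ^ k * ‖c k‖ ≤ t ^ (n - 1) * C := by
          rw [hC, Finset.mul_sum]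
          refine Finset.sum_le_sum fun k hk => ?_
          have hk' : k ≤ n - 1 := by
            have := Finset.mem_range.1 hk; omega
          exact mul_le_mul_of_nonneg_right (pow_le_pow_right₀ ht hk') (norm_nonneg _)
        have h4 : t ^ (n - 1) * (t * ‖c n‖) ≤ t ^ (n - 1) * (M + C) := by
          have hpow : t ^ n = t ^ (n - 1) * t := by
            conv_lhs => rw [show n = (n - 1) + 1 by omega]
            rw [pow_succ]
          calc t ^ (n - 1) * (t * ‖c n‖) = t ^ n * ‖c n‖ := by rw [hpow]; ring
            _ ≤ M + ∑ k ∈ range n, t ^ k * ‖c k‖ := h2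
            _ ≤ M + t ^ (n - 1) * C := by linarith
            _ ≤ t ^ (n - 1) * (M + C) := by
                have h5 : (1:ℝ) ≤ t ^ (n - 1) := one_le_pow₀ ht
                nlinarith
        exact le_of_mul_le_mul_left h4 (pow_pos ht0 (n - 1))
      have hpos : 0 < ‖c n‖ := norm_pos_iff.2 hc0
      set t : ℝ := max 1 ((M + C + 1) / ‖c n‖) with htdef
      have ht : 1 ≤ t := le_max_left _ _
      have h4 : M + C + 1 ≤ t * ‖c n‖ := by
        have hle : (M + C + 1) / ‖c n‖ ≤ t := le_max_right _ _
        calc M + C + 1 = ((M + C + 1) / ‖c n‖) * ‖c n‖ := (div_mul_cancel₀ _ hpos.ne').symm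
          _ ≤ t * ‖c n‖ := mul_le_mul_of_nonneg_right hle (norm_nonneg _)
      linarith [key t ht]
    rcases Nat.lt_or_ge k n with hlt | hge
    · refine ih ?_ k hk1 hlt
      intro t ht
      have := h t ht
      rwa [Finset.sum_range_succ, hcn, smul_zero, add_zero] at this
    · have : k = n := by omega
      rw [this]; exact hcn

lemma selfadj_step (X B : 𝔸) (hX : IsSelfAdjoint X) {s : ℕ} (hs : 1 ≤ s)
    (h : ((adE X) ^ s) B = 0) : X * B = B * X := by
  obtain ⟨r, rfl⟩ : ∃ r, s = r + 1 := ⟨s - 1, by omega⟩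
  set a : ℕ → 𝔸 := fun k => ((adE X) ^ k) B with ha
  have ha_succ : ∀ k, a (k + 1) = X * a k - a k * X := by
    intro k
    show ((adE X) ^ (k + 1)) B = _
    rw [pow_succ', Module.End.mul_apply]; rfl
  have har : a (r + 1) = 0 := h
  set w : 𝔸 := Complex.I • X with hw
  set z : ℕ → ℂ := fun k => (k.factorial : ℂ)⁻¹ * Complex.I ^ k with hz
  set d : ℕ → 𝔸 := fun k => z k • a k with hd
  set P : ℝ → 𝔸 := fun t => ∑ k ∈ range (r + 1), t ^ k • d k with hP
  set DP : ℝ → 𝔸 := fun t => ∑ k ∈ range (r + 1), ((k : ℝ) * t ^ (k - 1)) • d k with hDP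
  set g : ℝ → 𝔸 := fun t => exp (t • w) with hg
  have hwd : ∀ k, w * d k - d k * w = (z k * Complex.I) • a (k + 1) := by
    intro k
    show w * (z k • a k) - (z k • a k) * w = _
    rw [hw, ha_succ k]
    simp only [smul_mul_assoc, mul_smul_comm, smul_smul, smul_sub,
      mul_comm Complex.I (z k)]
  have key : ∀ t : ℝ, DP t = w * P t - P t * w := by
    intro t
    have hrhs : w * P t - P t * w
        = ∑ k ∈ range (r + 1), t ^ k • ((z k * Complex.I) • a (k + 1)) := by
      show w * (∑ k ∈ range (r + 1), t ^ k • d k)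
          - (∑ k ∈ range (r + 1), t ^ k • d k) * w = _
      rw [Finset.mul_sum, Finset.sum_mul, ← Finset.sum_sub_distrib]
      refine Finset.sum_congr rfl fun k _ => ?_
      rw [← hwd k]
      simp only [mul_smul_comm, smul_mul_assoc, smul_sub]
    rw [hrhs, Finset.sum_range_succ, har, smul_zero, smul_zero, add_zero]
    show ∑ k ∈ range (r + 1), ((k : ℝ) * t ^ (k - 1)) • d k = _
    rw [Finset.sum_range_succ' _ r]
    simp only [Nat.cast_zero, zero_mul, zero_smul, add_zero]
    refine Finset.sum_congr rfl fun i _ => ?_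
    show (((i + 1 : ℕ) : ℝ) * t ^ (i + 1 - 1)) • (z (i + 1) • a (i + 1))
        = t ^ i • ((z i * Complex.I) • a (i + 1))
    rw [Nat.add_sub_cancel, ← Complex.coe_smul, ← Complex.coe_smul, smul_smul, smul_smul]
    congr 1
    simp only [hz]
    have h1 : ((i.factorial : ℂ)) ≠ 0 := Nat.cast_ne_zero.2 i.factorial_ne_zero
    have h2 : ((i : ℂ) + 1) ≠ 0 := Nat.cast_add_one_ne_zero i
    push_cast [Nat.factorial_succ, pow_succ]
    field_simp
  have hPd : ∀ t : ℝ, HasDerivAt P (DP t) t := by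
    intro t
    exact HasDerivAt.fun_sum fun k _ => (hasDerivAt_pow k t).smul_const (d k)
  have hgd : ∀ t : ℝ, HasDerivAt g (g t * w) t := fun t => hasDerivAt_exp_smul_const w t
  have hgneg : ∀ t : ℝ, HasDerivAt (fun u : ℝ => g (-u)) (-(g (-t) * w)) t := by
    intro t
    have h1 := (hasDerivAt_exp_smul_const w (-t)).scomp t (hasDerivAt_neg t)
    have hfun : (fun u : ℝ => g (-u)) = fun x : ℝ => exp (-(x • w)) := by
      funext u
      show exp ((-u) • w) = _
      rw [neg_smul]
    have hval : g (-t) = exp (-(t • w)) := by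
      show exp ((-t) • w) = _
      rw [neg_smul]
    rw [hfun, hval]
    simpa [Function.comp_def, neg_smul] using h1
  have hgw : ∀ u : ℝ, g u * w = w * g u := fun u =>
    (((Commute.refl w).smul_left u).exp_left).eq
  set F : ℝ → 𝔸 := fun t => g (-t) * (P t * g t) with hF
  have hFd : ∀ t : ℝ, HasDerivAt F 0 t := by
    intro t
    have h1 := (hgneg t).fun_mul ((hPd t).fun_mul (hgd t))
    have h2 : -(g (-t) * w) * (P t * g t) + g (-t) * (DP t * g t + P t * (g t * w)) = 0 := by
      rw [key t, hgw t]
      noncomm_ring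
    rw [h2] at h1
    exact h1
  have hconst : ∀ t : ℝ, F t = F 0 := fun t =>
    is_const_of_deriv_eq_zero (fun u => (hFd u).differentiableAt) (fun u => (hFd u).deriv) t 0
  have hg0 : g 0 = 1 := by
    show exp ((0 : ℝ) • w) = 1
    rw [zero_smul, exp_zero]
  have hP0 : P 0 = B := by
    show ∑ k ∈ range (r + 1), (0 : ℝ) ^ k • d k = B
    have h0 : ∀ k ∈ range (r + 1), k ≠ 0 → (0 : ℝ) ^ k • d k = 0 := by
      intro k _ hk
      rw [zero_pow hk, zero_smul]
    rw [Finset.sum_eq_single_of_mem 0 (Finset.mem_range.2 (by omega)) h0]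
    show (0 : ℝ) ^ 0 • (z 0 • a 0) = B
    have hz0 : z 0 = 1 := by simp [hz]
    rw [pow_zero, one_smul, hz0, one_smul]
    show ((adE X) ^ 0) B = B
    rw [pow_zero]
    rfl
  have hF0 : F 0 = B := by
    show g (-0) * (P 0 * g 0) = B
    rw [neg_zero, hg0, hP0, one_mul, mul_one]
  have hinv1 : ∀ t : ℝ, g t * g (-t) = 1 := by
    intro t
    show exp (t • w) * exp ((-t) • w) = 1
    rw [← exp_add_of_commute (((Commute.refl w).smul_left t).smul_right (-t)),
      ← add_smul, add_neg_cancel, zero_smul, exp_zero]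
  have hPt : ∀ t : ℝ, P t = g t * B * g (-t) := by
    intro t
    have h1 : g (-t) * (P t * g t) = B := (hconst t).trans hF0
    have h2 := congrArg (fun W => g t * W * g (-t)) h1
    have h3 : g t * (g (-t) * (P t * g t)) * g (-t) = P t := by
      rw [← mul_assoc (g t) (g (-t)), hinv1 t, one_mul, mul_assoc, hinv1 t, mul_one]
    rw [h3] at h2
    exact h2
  have hU : ∀ u : ℝ, g u ∈ unitary 𝔸 := by
    intro u
    have hsa : IsSelfAdjoint (((u : ℂ)) • X) := by
      show star (((u : ℂ)) • X) = _
      rw [star_smul, hX.star_eq, Complex.star_def, Complex.conj_ofReal]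
    have hmem : u • w ∈ skewAdjoint 𝔸 := by
      have huw : u • w = Complex.I • (((u : ℂ)) • X) := by
        rw [hw, smul_comm, Complex.coe_smul]
      rw [huw]
      refine hsa.smul_mem_skewAdjoint ?_
      rw [skewAdjoint.mem_iff]
      exact Complex.conj_I
    have hge : g u = exp (u • w) := rfl
    rw [hge]
    exact exp_mem_unitary_of_mem_skewAdjoint hmem
  have hbound : ∀ t : ℝ, 1 ≤ t → ‖∑ k ∈ range (r + 1), t ^ k • d k‖ ≤ ‖B‖ := by
    intro t _
    have he : ∑ k ∈ range (r + 1), t ^ k • d k = P t := rfl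
    rw [he, hPt t, CStarRing.norm_mul_mem_unitary _ (hU (-t)),
      CStarRing.norm_mem_unitary_mul _ (hU t)]
  have ha1 : a 1 = 0 := by
    rcases Nat.eq_zero_or_pos r with rfl | hr
    · exact har
    · have hd1 : d 1 = 0 :=
        coeff_zero_of_bounded (r + 1) d ‖B‖ hbound 1 le_rfl (by omega)
      have hz1 : z 1 ≠ 0 := by
        simp [hz, Complex.I_ne_zero]
      rcases smul_eq_zero.mp hd1 with h' | h'
      · exact absurd h' hz1
      · exact h'
  have : X * B - B * X = 0 := by
    have := ha1
    rw [ha_succ 0] at this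
    simpa [ha] using this
  rw [sub_eq_zero] at this
  exact this

lemma fuglede (S X : 𝔸) (hS : S * star S = star S * S) (h : S * X = X * S) :
    star S * X = X * star S := by
  set T : 𝔸 := star S with hT
  set f : ℂ → 𝔸 := fun z => exp (z • T) * (X * exp (-(z • T))) with hf
  have hd1 : Differentiable ℂ fun z : ℂ => exp (z • T) := fun z =>
    (hasDerivAt_exp_smul_const T z).differentiableAt
  have hd2 : Differentiable ℂ fun z : ℂ => exp (-(z • T)) := by
    have : (fun z : ℂ => exp (-(z • T))) = fun z : ℂ => exp (z • (-T)) := by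
      funext z; rw [smul_neg]
    rw [this]
    exact fun z => (hasDerivAt_exp_smul_const (-T) z).differentiableAt
  have hdf : Differentiable ℂ f := hd1.mul ((differentiable_const X).mul hd2)
  -- norm bound
  have hXS : Commute S X := h
  have hnorm : ∀ z : ℂ, ‖f z‖ ≤ ‖X‖ := by
    intro z
    set cz : ℂ := starRingEnd ℂ z with hcz
    have hTS : Commute T S := by
      show T * S = S * T
      rw [hT, ← hS]
    -- X commutes with exp (cz • S) and its inverse
    have hX1 : Commute (exp (cz • S)) X := (hXS.smul_left cz).exp_left
    have hX2 : Commute (exp (-(cz • S))) X := by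
      have : (-(cz • S)) = (-cz) • S := by rw [neg_smul]
      rw [this]
      exact (hXS.smul_left (-cz)).exp_left
    have hinv : exp (-(cz • S)) * exp (cz • S) = 1 := by
      rw [← exp_add_of_commute (Commute.refl (cz • S)).neg_left, neg_add_cancel, exp_zero]
    have hid : X = exp (-(cz • S)) * (X * exp (cz • S)) := by
      have : exp (-(cz • S)) * (X * exp (cz • S)) = X := by
        rw [← mul_assoc, hX2.eq, mul_assoc, hinv, mul_one]
      exact this.symm
    set K : 𝔸 := z • T - cz • S with hK
    have hKsk : K ∈ skewAdjoint 𝔸 := by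
      rw [skewAdjoint.mem_iff]
      show star (z • T - cz • S) = -(z • T - cz • S)
      rw [star_sub, star_smul, star_smul]
      have e1 : star T = S := by rw [hT, star_star]
      have e2 : (star S : 𝔸) = T := hT.symm
      rw [e1, e2]
      simp only [Complex.star_def, hcz, Complex.conj_conj, neg_sub]
    have hKsk' : -K ∈ skewAdjoint 𝔸 := neg_mem hKsk
    have hU1 : exp K ∈ unitary 𝔸 := exp_mem_unitary_of_mem_skewAdjoint hKsk
    have hU2 : exp (-K) ∈ unitary 𝔸 := exp_mem_unitary_of_mem_skewAdjoint hKsk'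
    have hcomm1 : Commute (z • T) (-(cz • S)) := ((hTS.smul_left z).smul_right cz).neg_right
    have he1 : exp (z • T) * exp (-(cz • S)) = exp K := by
      rw [← exp_add_of_commute hcomm1, hK, sub_eq_add_neg]
    have hcomm2 : Commute (cz • S) (-(z • T)) := (((hTS.symm).smul_left cz).smul_right z).neg_right
    have he2 : exp (cz • S) * exp (-(z • T)) = exp (-K) := by
      rw [← exp_add_of_commute hcomm2, hK]
      congr 1
      rw [neg_sub, sub_eq_add_neg]
    have hfz : f z = exp K * (X * exp (-K)) := by
      show exp (z • T) * (X * exp (-(z • T))) = _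
      rw [← he1, ← he2]
      conv_lhs => rw [hid]
      simp only [mul_assoc]
    rw [hfz, CStarRing.norm_mem_unitary_mul _ hU1,
      CStarRing.norm_mul_mem_unitary _ hU2]
  have hb : Bornology.IsBounded (Set.range f) := by
    rw [isBounded_iff_forall_norm_le]
    exact ⟨‖X‖, by rintro y ⟨z, rfl⟩; exact hnorm z⟩
  have hfz : ∀ z : ℂ, f z = X := by
    intro z
    have h0 : f 0 = X := by
      show exp ((0 : ℂ) • T) * (X * exp (-((0 : ℂ) • T))) = X
      rw [zero_smul, neg_zero, exp_zero, one_mul, mul_one]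
    rw [← h0]
    exact hdf.apply_eq_apply_of_bounded hb z 0
  have hcm : ∀ z : ℂ, exp (z • T) * X = X * exp (z • T) := by
    intro z
    have hinv : exp (-(z • T)) * exp (z • T) = 1 := by
      rw [← exp_add_of_commute (Commute.refl (z • T)).neg_left, neg_add_cancel, exp_zero]
    have h1 := congrArg (fun W => W * exp (z • T)) (hfz z)
    rw [mul_assoc, mul_assoc, hinv, mul_one] at h1
    exact h1
  -- differentiate at 0
  have h1 : HasDerivAt (fun z : ℂ => exp (z • T) * X) (T * X) 0 := by
    have := (hasDerivAt_exp_smul_const T (0 : ℂ)).mul_const X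
    simpa using this
  have h2 : HasDerivAt (fun z : ℂ => exp (z • T) * X) (X * T) 0 := by
    have hfe : (fun z : ℂ => exp (z • T) * X) = fun z : ℂ => X * exp (z • T) := by
      funext z; exact hcm z
    rw [hfe]
    have := (hasDerivAt_exp_smul_const' T (0 : ℂ)).const_mul X
    simpa using this
  exact h1.unique h2
end Stmt11Aux

/-- The `s`-centralizer of a set of bounded operators. -/
def sCentralizer {H : Type*} [NormedAddCommGroup H] [InnerProductSpace ℂ H]
    [CompleteSpace H] (s : ℕ) (S : Set (H →L[ℂ] H)) : Set (H →L[ℂ] H) :=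
  {X | ∀ Y ∈ S, (fun Z => Y * Z - Z * Y)^[s] X = 0}

/-- The von Neumann algebra generated by `A` and the identity, realized via the
double commutant theorem as the double commutant of `{A, A*}`. -/
def vN {H : Type*} [NormedAddCommGroup H] [InnerProductSpace ℂ H]
    [CompleteSpace H] (A : H →L[ℂ] H) : Set (H →L[ℂ] H) :=
  Set.centralizer (Set.centralizer {A, star A})

theorem stmt11 {H : Type*} [NormedAddCommGroup H] [InnerProductSpace ℂ H]
    [CompleteSpace H] (A S N : H →L[ℂ] H) (m : ℕ) (hA : A = S + N)
    (hS : S * star S = star S * S) (hN : N ^ (m + 1) = 0) (hSN : S * N = N * S)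
    (hcomm : ∀ X : H →L[ℂ] H, A * X = X * A → S * X = X * S)
    (s : ℕ) (hs : 2 * m + 1 ≤ s) :
    sCentralizer s (sCentralizer s {A}) ⊆ sCentralizer 1 (sCentralizer 1 {A}) ∧
      sCentralizer s (sCentralizer s {A}) ⊆ vN A := by
  rcases subsingleton_or_nontrivial (H →L[ℂ] H) with hsub | hnt
  · exact ⟨fun B _ Y _ => Subsingleton.elim _ _, fun B _ Y _ => Subsingleton.elim _ _⟩
  have hs1 : (1 : ℕ) ≤ s := by omega
  have part1 : sCentralizer s (sCentralizer s {A}) ⊆ sCentralizer 1 (sCentralizer 1 {A}) := by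
    intro B hB Y hY
    show Y * B - B * Y = 0
    have hAY : A * Y = Y * A := by
      have h1 : A * Y - Y * A = 0 := hY A (Set.mem_singleton A)
      exact sub_eq_zero.mp h1
    have hSY : S * Y = Y * S := hcomm Y hAY
    have hTY : star S * Y = Y * star S := Stmt11Aux.fuglede S Y hS hSY
    have hSYs : S * star Y = star Y * S := by
      have h2 := congrArg star hTY
      rw [star_mul, star_mul, star_star] at h2
      exact h2.symm
    set Y1 : H →L[ℂ] H := Y + star Y with hY1
    set Y2 : H →L[ℂ] H := Complex.I • (Y - star Y) with hY2
    have hY1sa : IsSelfAdjoint Y1 := by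
      show star Y1 = Y1
      rw [hY1, star_add, star_star, add_comm]
    have hY2sa : IsSelfAdjoint Y2 := by
      show star Y2 = Y2
      rw [hY2, star_smul, star_sub, star_star, Complex.star_def, Complex.conj_I,
        neg_smul, ← smul_neg, neg_sub]
    have hSY1 : S * Y1 = Y1 * S := by
      rw [hY1, mul_add, add_mul, hSY, hSYs]
    have hSY2 : S * Y2 = Y2 * S := by
      rw [hY2, mul_smul_comm, smul_mul_assoc, mul_sub, sub_mul, hSY, hSYs]
    have hY1mem : Y1 ∈ sCentralizer s {A} := by
      intro Z hZ
      rw [Set.mem_singleton_iff] at hZ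
      rw [hZ, Stmt11Aux.iterate_eq]
      exact Stmt11Aux.cs_of_commutes A S N m hA hSN hN hs Y1 hSY1
    have hY2mem : Y2 ∈ sCentralizer s {A} := by
      intro Z hZ
      rw [Set.mem_singleton_iff] at hZ
      rw [hZ, Stmt11Aux.iterate_eq]
      exact Stmt11Aux.cs_of_commutes A S N m hA hSN hN hs Y2 hSY2
    have hb1 := hB Y1 hY1mem
    have hb2 := hB Y2 hY2mem
    rw [Stmt11Aux.iterate_eq] at hb1 hb2
    have hc1 : Y1 * B = B * Y1 := Stmt11Aux.selfadj_step Y1 B hY1sa hs1 hb1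
    have hc2 : Y2 * B = B * Y2 := Stmt11Aux.selfadj_step Y2 B hY2sa hs1 hb2
    have hc2' : (Y - star Y) * B = B * (Y - star Y) := by
      have h3 := hc2
      rw [hY2, smul_mul_assoc, mul_smul_comm] at h3
      exact smul_right_injective _ Complex.I_ne_zero h3
    have e1 : Y * B + star Y * B = B * Y + B * star Y := by
      have h4 := hc1
      rw [hY1, add_mul, mul_add] at h4
      exact h4
    have e2 : Y * B - star Y * B = B * Y - B * star Y := by
      have h4 := hc2'
      rw [sub_mul, mul_sub] at h4
      exact h4
    have e3 : Y * B + Y * B = B * Y + B * Y := by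
      have h4 : (Y * B + star Y * B) + (Y * B - star Y * B)
          = (B * Y + B * star Y) + (B * Y - B * star Y) := by rw [e1, e2]
      have l : ∀ a b : H →L[ℂ] H, (a + b) + (a - b) = a + a := fun a b => by abel
      rw [l, l] at h4
      exact h4
    have e4 : (2 : ℂ) • (Y * B) = (2 : ℂ) • (B * Y) := by
      rw [two_smul, two_smul]
      exact e3
    have e5 : Y * B = B * Y := smul_right_injective _ two_ne_zero e4
    rw [e5, sub_self]
  refine ⟨part1, fun B hB => ?_⟩
  intro Z hZ
  show Z * B = B * Z
  have hZA : A * Z = Z * A := hZ A (Set.mem_insert _ _)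
  have hZmem : Z ∈ sCentralizer 1 {A} := by
    intro W hW
    rw [Set.mem_singleton_iff] at hW
    show W * Z - Z * W = 0
    rw [hW, hZA, sub_self]
  have h5 : Z * B - B * Z = 0 := part1 hB Z hZmem
  exact sub_eq_zero.mp h5
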